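/- For any balanced lattice design X ∈ U(n, q^s) with n ≥ 2 and any convex function ψ : ℝ → ℝ, ∑_{1 ≤ i < k ≤ n} ψ(β(x_i, x_k)) ≥ m(1 − f)ψ(θ) + m f ψ(θ + 1), where m = n(n−1)/2, β̄ = s(n−q)/(q(n−1)), θ = ⌊β̄⌋ and f = β̄ − θ. -/

import Mathlib

open Finset

/-- The coincidence number β(x, w) = #{j : x_j = w_j} of two lattice points. -/
def coincidence {s q : ℕ} (x w : Fin s → Fin q) : ℕ :=
  (univ.filter fun j => x j = w j).card

/-- A design `X ∈ U(n, q^s)` is balanced: `q ∣ n` and every level occurs exactly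
`n / q` times in each column. -/
def IsBalanced {n s q : ℕ} (X : Fin n → Fin s → Fin q) : Prop :=
  q ∣ n ∧ ∀ (j : Fin s) (ℓ : Fin q),
    (univ.filter fun i => X i j = ℓ).card = n / q

/-- The index set of pairs 1 ≤ i < k ≤ n. -/
def pairs (n : ℕ) : Finset (Fin n × Fin n) := univ.filter fun p => p.1 < p.2

lemma sum_sym_split {n : ℕ} (g : Fin n × Fin n → ℕ)
    (hg : ∀ i k : Fin n, g (i, k) = g (k, i)) :
    ∑ p : Fin n × Fin n, g p = 2 * ∑ p ∈ pairs n, g p + ∑ i : Fin n, g (i, i) := by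
  classical
  rw [← Finset.sum_filter_add_sum_filter_not univ (fun p : Fin n × Fin n => p.1 < p.2)]
  rw [← Finset.sum_filter_add_sum_filter_not
      (univ.filter fun p : Fin n × Fin n => ¬ p.1 < p.2)
      (fun p : Fin n × Fin n => p.2 < p.1)]
  have h1 : ((univ.filter fun p : Fin n × Fin n => ¬ p.1 < p.2).filter
      fun p : Fin n × Fin n => p.2 < p.1) = univ.filter fun p : Fin n × Fin n => p.2 < p.1 := by
    ext p
    simp only [Finset.mem_filter, Finset.mem_univ, true_and]
    constructor
    · rintro ⟨_, h⟩; exact h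
    · intro h; exact ⟨fun h' => absurd h (lt_asymm h'), h⟩
  have h2 : ((univ.filter fun p : Fin n × Fin n => ¬ p.1 < p.2).filter
      fun p : Fin n × Fin n => ¬ p.2 < p.1) = univ.filter fun p : Fin n × Fin n => p.1 = p.2 := by
    ext p
    simp only [Finset.mem_filter, Finset.mem_univ, true_and]
    constructor
    · rintro ⟨h, h'⟩; exact le_antisymm (not_lt.mp h') (not_lt.mp h)
    · intro h; exact ⟨by omega, by omega⟩
  rw [h1, h2]
  have h3 : ∑ p ∈ univ.filter (fun p : Fin n × Fin n => p.2 < p.1), g p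
      = ∑ p ∈ pairs n, g p := by
    refine Finset.sum_equiv (Equiv.prodComm (Fin n) (Fin n)) ?_ ?_
    · intro p
      simp [pairs, Equiv.prodComm]
    · intro p _
      exact (hg p.2 p.1).symm
  have h4 : ∑ p ∈ univ.filter (fun p : Fin n × Fin n => p.1 = p.2), g p
      = ∑ i : Fin n, g (i, i) := by
    rw [Finset.sum_filter, Fintype.sum_prod_type]
    simp
  rw [h3, h4]
  unfold pairs
  ring

lemma chord_bound (ψ : ℝ → ℝ) (hψ : ConvexOn ℝ Set.univ ψ) (θ b : ℕ) :
    ψ θ + (ψ ((θ : ℝ) + 1) - ψ θ) * ((b : ℝ) - θ) ≤ ψ b := by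
  rcases lt_trichotomy b θ with hb | hb | hb
  · have hlt : (b : ℝ) < θ := by exact_mod_cast hb
    have := hψ.slope_mono_adjacent (Set.mem_univ (b : ℝ)) (Set.mem_univ ((θ : ℝ) + 1))
      hlt (by linarith)
    rw [div_le_div_iff₀ (by linarith) (by linarith)] at this
    nlinarith [this]
  · subst hb; simp
  · rcases eq_or_lt_of_le (Nat.succ_le_of_lt hb) with hb1 | hb1
    · have : (b : ℝ) = (θ : ℝ) + 1 := by exact_mod_cast hb1.symm
      rw [this]
      have h0 : (θ : ℝ) + 1 - (θ : ℝ) = 1 := by ring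
      rw [h0, mul_one]
      linarith
    · have hlt : (θ : ℝ) + 1 < b := by exact_mod_cast hb1
      have := hψ.slope_mono_adjacent (Set.mem_univ (θ : ℝ)) (Set.mem_univ (b : ℝ))
        (by linarith) hlt
      rw [div_le_div_iff₀ (by linarith) (by linarith)] at this
      nlinarith [this]

/-- Theorem 1 (second part): for any balanced design `X ∈ U(n, q^s)` and convex
kernel ψ, the Schur-ψ criterion ∑_{i<k} ψ(β(x_i, x_k)) is bounded below by
m(1 − f)ψ(θ) + m f ψ(θ + 1), where m = n(n−1)/2, β̄ = s(n−q)/(q(n−1)),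
θ = ⌊β̄⌋ and f = β̄ − θ. -/
theorem schur_criterion_lower_bound (n s q : ℕ) (hq : 2 ≤ q) (hn : 2 ≤ n)
    (X : Fin n → Fin s → Fin q) (hX : IsBalanced X)
    (ψ : ℝ → ℝ) (hψ : ConvexOn ℝ Set.univ ψ)
    (m : ℝ) (hm : m = (n : ℝ) * ((n : ℝ) - 1) / 2)
    (βbar : ℝ) (hβbar : βbar = (s : ℝ) * ((n : ℝ) - q) / ((q : ℝ) * ((n : ℝ) - 1)))
    (θ : ℕ) (hθ : θ = ⌊βbar⌋₊)
    (f : ℝ) (hf : f = βbar - θ) :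
    m * (1 - f) * ψ θ + m * f * ψ (θ + 1) ≤
      ∑ p ∈ pairs n, ψ (coincidence (X p.1) (X p.2)) := by
  classical
  obtain ⟨hdvd, hbal⟩ := hX
  have hq0 : (0 : ℝ) < q := by positivity
  have hn1 : (1 : ℝ) < n := by exact_mod_cast hn
  -- cardinality of pairs
  have hcard : (n : ℕ) * n = 2 * (pairs n).card + n := by
    have := sum_sym_split (n := n) (fun _ => 1) (fun _ _ => rfl)
    simp only [Finset.sum_const, smul_eq_mul, mul_one, Finset.card_univ, Fintype.card_prod,
      Fintype.card_fin] at this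
    exact this
  have hcardR : ((pairs n).card : ℝ) = m := by
    have : ((n : ℕ) * n : ℕ) = ((2 * (pairs n).card + n : ℕ)) := by exact_mod_cast hcard
    have h2 : (n : ℝ) * n = 2 * ((pairs n).card : ℝ) + n := by exact_mod_cast this
    rw [hm]; linarith
  -- counting identity
  set T : ℕ := ∑ p ∈ pairs n, coincidence (X p.1) (X p.2) with hTdef
  have hcol : ∀ j : Fin s,
      ∑ p : Fin n × Fin n, (if X p.1 j = X p.2 j then 1 else 0)
        = n * (n / q) := by
    intro j
    rw [Fintype.sum_prod_type]
    have : ∀ i : Fin n, ∑ k : Fin n, (if X i j = X k j then 1 else 0) = n / q := by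
      intro i
      have hbool : (∑ k : Fin n, if X i j = X k j then 1 else 0)
          = (univ.filter fun k : Fin n => X i j = X k j).card := by
        rw [Finset.card_eq_sum_ones, Finset.sum_filter]
      rw [hbool]
      have : (univ.filter fun k : Fin n => X i j = X k j)
          = univ.filter fun k : Fin n => X k j = X i j := by
        ext k; simp [eq_comm]
      rw [this, hbal j (X i j)]
    rw [Finset.sum_congr rfl fun i _ => this i]
    simp [Finset.sum_const, mul_comm]
  have hcount : s * (n * (n / q)) = 2 * T + s * n := by
    have key : ∀ j : Fin s,
        ∑ p : Fin n × Fin n, (if X p.1 j = X p.2 j then 1 else 0)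
          = 2 * (∑ p ∈ pairs n, if X p.1 j = X p.2 j then 1 else 0) + n := by
      intro j
      have := sum_sym_split (n := n)
        (fun p => if X p.1 j = X p.2 j then 1 else 0)
        (fun i k => by simp [eq_comm])
      simpa using this
    have hT2 : T = ∑ j : Fin s, ∑ p ∈ pairs n, (if X p.1 j = X p.2 j then 1 else 0) := by
      rw [hTdef, Finset.sum_comm]
      refine Finset.sum_congr rfl fun p _ => ?_
      simp only [coincidence, Finset.card_eq_sum_ones, Finset.sum_filter]
    calc s * (n * (n / q)) = ∑ j : Fin s, (n * (n / q)) := by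
          simp [mul_comm]
      _ = ∑ j : Fin s, (2 * (∑ p ∈ pairs n, if X p.1 j = X p.2 j then 1 else 0) + n) := by
          refine Finset.sum_congr rfl fun j _ => ?_
          rw [← key j, hcol j]
      _ = 2 * T + s * n := by
          rw [Finset.sum_add_distrib, ← Finset.mul_sum, ← hT2]
          simp [mul_comm]
  -- real version: T = m * βbar
  have hnq : (q : ℝ) * ((n / q : ℕ) : ℝ) = n := by
    obtain ⟨c, hc⟩ := hdvd
    subst hc
    rw [Nat.mul_div_cancel_left c (by omega)]
    push_cast; ring
  have hTR : (T : ℝ) = m * βbar := by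
    have h1 : (s : ℝ) * ((n : ℝ) * ((n / q : ℕ) : ℝ)) = 2 * T + s * n := by
      exact_mod_cast hcount
    rw [hm, hβbar]
    have hq' : (q : ℝ) ≠ 0 := ne_of_gt hq0
    have hn' : (n : ℝ) - 1 ≠ 0 := by linarith
    field_simp
    linear_combination (-(q : ℝ)) * h1 + ((s : ℝ) * (n : ℝ)) * hnq
  -- chord bound summed
  have hsum : ∑ p ∈ pairs n,
      (ψ θ + (ψ ((θ : ℝ) + 1) - ψ θ) * ((coincidence (X p.1) (X p.2) : ℝ) - θ)) ≤
      ∑ p ∈ pairs n, ψ (coincidence (X p.1) (X p.2)) := by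
    refine Finset.sum_le_sum fun p _ => ?_
    exact chord_bound ψ hψ θ (coincidence (X p.1) (X p.2))
  have hTcast : ∑ p ∈ pairs n, ((coincidence (X p.1) (X p.2) : ℝ)) = (T : ℝ) := by
    rw [hTdef]; push_cast; ring
  have hlin : ∑ p ∈ pairs n,
      (ψ θ + (ψ ((θ : ℝ) + 1) - ψ θ) * ((coincidence (X p.1) (X p.2) : ℝ) - θ))
      = ((pairs n).card : ℝ) * ψ θ
        + (ψ ((θ : ℝ) + 1) - ψ θ) * ((T : ℝ) - ((pairs n).card : ℝ) * θ) := by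
    rw [Finset.sum_add_distrib, Finset.sum_const, ← Finset.mul_sum, Finset.sum_sub_distrib,
      hTcast, Finset.sum_const]
    push_cast
    ring
  rw [hlin, hcardR, hTR] at hsum
  calc m * (1 - f) * ψ θ + m * f * ψ ((θ : ℝ) + 1)
      = m * ψ θ + (ψ ((θ : ℝ) + 1) - ψ θ) * (m * βbar - m * θ) := by
        rw [hf]; ring
    _ ≤ ∑ p ∈ pairs n, ψ (coincidence (X p.1) (X p.2)) := hsum
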